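/- arXiv:2408.09000 — 2 statements merged into one kernel-verified Lean document; each statement's English description precedes it below -/
import Mathlib

section
/- If X_T ~ N(0, T) and x̂₀(x_T) = x_T · √(2^(1-γ) / ((T+1)^γ (T+2)^(1-γ))), then x̂₀(X_T) is Gaussian with mean 0 and variance T·2^(1-γ)/((T+1)^γ (T+2)^(1-γ)), and this variance converges to 2^(1-γ) as T → ∞. -/
open Real MeasureTheory ProbabilityTheory Filter

/-- If `X_T ~ N(0, T)` and `x̂₀(x_T) = x_T · √(2^(1-γ)/((T+1)^γ (T+2)^(1-γ)))`, then
`x̂₀(X_T)` is Gaussian with mean `0` and variance `T·2^(1-γ)/((T+1)^γ (T+2)^(1-γ))`, and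
this variance converges to `2^(1-γ)` as `T → ∞`. -/
theorem stmt_7 (γ : ℝ) :
    (∀ T : ℝ, 0 < T →
      Measure.map
        (fun xT : ℝ => xT * Real.sqrt ((2:ℝ) ^ (1 - γ) / ((T + 1) ^ γ * (T + 2) ^ (1 - γ))))
        (gaussianReal 0 T.toNNReal)
      = gaussianReal 0 ((T * (2:ℝ) ^ (1 - γ) / ((T + 1) ^ γ * (T + 2) ^ (1 - γ))).toNNReal))
    ∧ Tendsto (fun T : ℝ => T * (2:ℝ) ^ (1 - γ) / ((T + 1) ^ γ * (T + 2) ^ (1 - γ)))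
        atTop (nhds ((2:ℝ) ^ (1 - γ))) := by
  constructor
  · intro T hT
    have hc : (0:ℝ) ≤ (2:ℝ) ^ (1 - γ) / ((T + 1) ^ γ * (T + 2) ^ (1 - γ)) := by positivity
    have hv : (0:ℝ) ≤ T * (2:ℝ) ^ (1 - γ) / ((T + 1) ^ γ * (T + 2) ^ (1 - γ)) := by positivity
    rw [gaussianReal_map_mul_const]
    congr 1
    · simp
    · ext
      push_cast
      rw [Real.sq_sqrt hc, Real.coe_toNNReal _ hT.le, Real.coe_toNNReal _ hv]
      ring
  · have key : ∀ c : ℝ, 0 < c → Tendsto (fun T : ℝ => T / (T + c)) atTop (nhds 1) := by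
      intro c hc
      have h := tendsto_inv_atTop_zero.comp
        (tendsto_atTop_add_const_right atTop c (tendsto_id (α := ℝ)))
      have h2 : Tendsto (fun T : ℝ => 1 - c * (T + c)⁻¹) atTop (nhds (1 - c * 0)) :=
        tendsto_const_nhds.sub (tendsto_const_nhds.mul h)
      rw [mul_zero, sub_zero] at h2
      refine h2.congr' ?_
      filter_upwards [eventually_gt_atTop (0:ℝ)] with T hT
      have : T + c ≠ 0 := by positivity
      field_simp
      ring
    have h1 := (key 1 one_pos).rpow_const (Or.inl one_ne_zero) (p := γ)
    have h2 := (key 2 two_pos).rpow_const (Or.inl one_ne_zero) (p := 1 - γ)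
    have h3 := (h1.mul (h2.mul (tendsto_const_nhds (x := (2:ℝ) ^ (1 - γ)))))
    rw [Real.one_rpow, Real.one_rpow, one_mul, one_mul] at h3
    refine h3.congr' ?_
    filter_upwards [eventually_gt_atTop (0:ℝ)] with T hT
    have hTT : T ^ γ * T ^ (1 - γ) = T := by
      rw [← Real.rpow_add hT]; simp
    rw [div_rpow hT.le (by positivity), div_rpow hT.le (by positivity)]
    have hA : (T + 1 : ℝ) ^ γ ≠ 0 := by positivity
    have hB : (T + 2 : ℝ) ^ (1 - γ) ≠ 0 := by positivity
    field_simp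
    exact hTT
end

section
/- For every γ > 1, we have 2^(1-γ) < (2 - 2^(2-2γ))/(2γ-1) < 2/(γ+1). That is, the CFG-DDIM variance is strictly smaller than the CFG-DDPM variance, which is strictly smaller than the gamma-powered variance. -/
open Real Set

private lemma log2_gt : (0.69:ℝ) < Real.log 2 := by
  have := Real.log_two_gt_d9; linarith

private lemma log2_lt : Real.log 2 < 0.7 := by
  have := Real.log_two_lt_d9; linarith

private lemma log2_pos : (0:ℝ) < Real.log 2 := Real.log_pos (by norm_num)

noncomputable def Ffun : ℝ → ℝ :=
  fun x => 2 - Real.exp ((2 - 2*x) * Real.log 2) - Real.exp ((1 - x) * Real.log 2) * (2*x - 1)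

noncomputable def Hfun : ℝ → ℝ :=
  fun x => Real.exp ((2 - 2*x) * Real.log 2) * (x + 1) - 4 + 2*x

private lemma F_hasDeriv (x : ℝ) :
    HasDerivAt Ffun
      (2 * Real.log 2 * Real.exp ((2 - 2*x) * Real.log 2)
        + Real.log 2 * Real.exp ((1 - x) * Real.log 2) * (2*x - 1)
        - 2 * Real.exp ((1 - x) * Real.log 2)) x := by
  have h1 : HasDerivAt (fun y : ℝ => (2 - 2*y) * Real.log 2) (-2 * Real.log 2) x := by
    simpa using (((hasDerivAt_id x).const_mul (2:ℝ)).const_sub (2:ℝ)).mul_const (Real.log 2)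
  have h2 : HasDerivAt (fun y : ℝ => Real.exp ((2 - 2*y) * Real.log 2))
      (Real.exp ((2 - 2*x) * Real.log 2) * (-2 * Real.log 2)) x := h1.exp
  have h3 : HasDerivAt (fun y : ℝ => (1 - y) * Real.log 2) (-1 * Real.log 2) x := by
    simpa using ((hasDerivAt_id x).const_sub (1:ℝ)).mul_const (Real.log 2)
  have h4 : HasDerivAt (fun y : ℝ => Real.exp ((1 - y) * Real.log 2))
      (Real.exp ((1 - x) * Real.log 2) * (-1 * Real.log 2)) x := h3.exp
  have h5 : HasDerivAt (fun y : ℝ => 2*y - 1) 2 x := by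
    simpa using ((hasDerivAt_id x).const_mul (2:ℝ)).sub_const (1:ℝ)
  have h6 := (h2.const_sub (2:ℝ)).sub (h4.mul h5)
  replace h6 : HasDerivAt Ffun _ x := h6
  convert h6 using 1
  ring

private lemma H_hasDeriv (x : ℝ) :
    HasDerivAt Hfun
      (-2 * Real.log 2 * Real.exp ((2 - 2*x) * Real.log 2) * (x + 1)
        + Real.exp ((2 - 2*x) * Real.log 2) + 2) x := by
  have h1 : HasDerivAt (fun y : ℝ => (2 - 2*y) * Real.log 2) (-2 * Real.log 2) x := by
    simpa using (((hasDerivAt_id x).const_mul (2:ℝ)).const_sub (2:ℝ)).mul_const (Real.log 2)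
  have h2 : HasDerivAt (fun y : ℝ => Real.exp ((2 - 2*y) * Real.log 2))
      (Real.exp ((2 - 2*x) * Real.log 2) * (-2 * Real.log 2)) x := h1.exp
  have h3 : HasDerivAt (fun y : ℝ => y + 1) 1 x := by
    simpa using (hasDerivAt_id x).add_const (1:ℝ)
  have h4 : HasDerivAt (fun y : ℝ => 2*y) 2 x := by
    simpa using (hasDerivAt_id x).const_mul (2:ℝ)
  have h5 := ((h2.mul h3).sub_const (4:ℝ)).add h4
  replace h5 : HasDerivAt Hfun _ x := h5
  convert h5 using 1
  ring

private lemma F_pos {γ : ℝ} (hγ : 1 < γ) : 0 < Ffun γ := by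
  have hmono : StrictMonoOn Ffun (Ici 1) := by
    apply strictMonoOn_of_deriv_pos (convex_Ici 1)
    · apply Continuous.continuousOn
      unfold Ffun; fun_prop
    · intro x hx
      rw [interior_Ici] at hx
      rw [(F_hasDeriv x).deriv]
      have hx1 : (1:ℝ) < x := hx
      set L := Real.log 2 with hL
      have hE : Real.exp ((2 - 2*x) * L) = Real.exp ((1 - x) * L) ^ 2 := by
        rw [← Real.exp_nat_mul]
        congr 1
        push_cast
        ring
      rw [hE]
      set e := Real.exp ((1 - x) * L) with he
      have hepos : 0 < e := Real.exp_pos _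
      have hub : (1 - x) * L + 1 ≤ e := Real.add_one_le_exp _
      have hL1 : L < 0.7 := log2_lt
      have hL2 : (0.69:ℝ) < L := log2_gt
      have key : 0 < 2 * L * e + L * (2*x - 1) - 2 := by
        nlinarith [mul_le_mul_of_nonneg_left hub (by positivity : (0:ℝ) ≤ 2 * L),
          mul_pos (mul_pos log2_pos (by linarith : (0:ℝ) < 1 - L)) (by linarith : (0:ℝ) < x - 1)]
      nlinarith [mul_pos hepos key]
  have h0 : Ffun 1 = 0 := by
    unfold Ffun
    norm_num
  calc (0:ℝ) = Ffun 1 := h0.symm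
    _ < Ffun γ := hmono self_mem_Ici (le_of_lt hγ) hγ

private lemma H_pos {γ : ℝ} (hγ : 1 < γ) : 0 < Hfun γ := by
  have hmono : StrictMonoOn Hfun (Ici 1) := by
    apply strictMonoOn_of_deriv_pos (convex_Ici 1)
    · apply Continuous.continuousOn
      unfold Hfun; fun_prop
    · intro x hx
      rw [interior_Ici] at hx
      rw [(H_hasDeriv x).deriv]
      have hx1 : (1:ℝ) < x := hx
      set L := Real.log 2 with hL
      set E := Real.exp ((2 - 2*x) * L) with hE
      have hEpos : 0 < E := Real.exp_pos _
      have hprod : E * Real.exp ((2*x - 2) * L) = 1 := by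
        rw [hE, ← Real.exp_add]
        have : (2 - 2*x) * L + (2*x - 2) * L = 0 := by ring
        rw [this, Real.exp_zero]
      have hub : (2*x - 2) * L + 1 ≤ Real.exp ((2*x - 2) * L) := Real.add_one_le_exp _
      have key : E * ((2*x - 2) * L + 1) ≤ 1 := by
        nlinarith [mul_le_mul_of_nonneg_left hub (le_of_lt hEpos)]
      have hL1 : L < 0.7 := log2_lt
      have hL2 : (0.69:ℝ) < L := log2_gt
      nlinarith [key, hEpos, mul_pos hEpos log2_pos,
        mul_pos (mul_pos hEpos log2_pos) (by linarith : (0:ℝ) < x - 1)]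
  have h0 : Hfun 1 = 0 := by
    unfold Hfun
    norm_num
  calc (0:ℝ) = Hfun 1 := h0.symm
    _ < Hfun γ := hmono self_mem_Ici (le_of_lt hγ) hγ

/-- For every `γ > 1`, `2^(1-γ) < (2 - 2^(2-2γ))/(2γ-1) < 2/(γ+1)`: the CFG-DDIM variance
is strictly smaller than the CFG-DDPM variance, which is strictly smaller than the
gamma-powered variance. -/
theorem stmt_9 (γ : ℝ) (hγ : 1 < γ) :
    (2:ℝ) ^ (1 - γ) < (2 - (2:ℝ) ^ (2 - 2 * γ)) / (2 * γ - 1)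
      ∧ (2 - (2:ℝ) ^ (2 - 2 * γ)) / (2 * γ - 1) < 2 / (γ + 1) := by
  have e1 : (2:ℝ) ^ (1 - γ) = Real.exp ((1 - γ) * Real.log 2) := by
    rw [Real.rpow_def_of_pos (by norm_num : (0:ℝ) < 2), mul_comm]
  have e2 : (2:ℝ) ^ (2 - 2 * γ) = Real.exp ((2 - 2*γ) * Real.log 2) := by
    rw [Real.rpow_def_of_pos (by norm_num : (0:ℝ) < 2), mul_comm]
  have hF := F_pos hγ
  have hH := H_pos hγ
  unfold Ffun at hF
  unfold Hfun at hH
  have hden1 : (0:ℝ) < 2 * γ - 1 := by linarith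
  have hden2 : (0:ℝ) < γ + 1 := by linarith
  constructor
  · rw [e1, e2, lt_div_iff₀ hden1]
    linarith
  · rw [e2, div_lt_div_iff₀ hden1 hden2]
    linarith
end
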